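/- Let κ be a cardinal such that for every set I of cardinality κ and every family of graphs (G_i)_{i∈I} with each |G_i| < κ, there is a normal fine κ-complete ultrafilter on 𝒫_κ(I ∪ ∏_{i∈I} G_i). Then for every such family there exist I₀ ⊆ I with |I₀| < κ and a graph homomorphism from ∏_{i ∈ I₀} G_i to ∏_{i ∈ I} G_i. -/

import Mathlib

open Cardinal

/-- A graph homomorphism is an edge-preserving map. -/
def IsGraphHom {G G' : Type*} (E : G → G → Prop) (E' : G' → G' → Prop)
    (h : G → G') : Prop :=
  ∀ v w, E v w → E' (h v) (h w)

/-- `U` is a fine ultrafilter on `𝒫_κ(X)`. -/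
def IsFineUF {X : Type} {κ : Cardinal.{0}}
    (U : Ultrafilter {A : Set X // #A < κ}) : Prop :=
  ∀ x : X, {A : {A : Set X // #A < κ} | x ∈ A.1} ∈ U

/-- `U` is a `κ`-complete ultrafilter on `𝒫_κ(X)`. -/
def IsKappaComplete {X : Type} (κ : Cardinal.{0})
    (U : Ultrafilter {A : Set X // #A < κ}) : Prop :=
  ∀ S : Set (Set {A : Set X // #A < κ}),
    #S < κ → (∀ s ∈ S, s ∈ U) → ⋂₀ S ∈ U

/-- `U` is a normal ultrafilter on `𝒫_κ(X)`: every choice function defined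
on a set in `U` is constant on a set in `U`. -/
def IsNormalUF {X : Type} {κ : Cardinal.{0}}
    (U : Ultrafilter {A : Set X // #A < κ}) : Prop :=
  ∀ f : {A : Set X // #A < κ} → X, ∀ D ∈ U, (∀ A ∈ D, f A ∈ A.1) →
    ∃ z : X, {A : {A : Set X // #A < κ} | f A = z} ∈ U

/-- If for every set `I` of cardinality `κ` and every family of graphs
`(G_i)_{i ∈ I}` with each `|G_i| < κ` there is a normal fine `κ`-complete
ultrafilter on `𝒫_κ(I ∪ ∏_{i∈I} G_i)`, then for every such family there is
an index set `I₀ ⊆ I` with `|I₀| < κ` and a graph homomorphism from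
`∏_{i ∈ I₀} G_i` to `∏_{i ∈ I} G_i`. -/
theorem subproduct_hom_of_normal_ultrafilter
    (κ : Cardinal.{0})
    (hU : ∀ (I : Type) (G : I → Type), #I = κ → (∀ i, #(G i) < κ) →
      ∃ U : Ultrafilter {A : Set (I ⊕ (∀ i, G i)) // #A < κ},
        IsFineUF U ∧ IsKappaComplete κ U ∧ IsNormalUF U) :
    ∀ (I : Type) (G : I → Type) (E : ∀ i, G i → G i → Prop),
      #I = κ → (∀ i, #(G i) < κ) →
      ∃ I₀ : Set I, #I₀ < κ ∧
        ∃ h : (∀ i : I₀, G i) → (∀ i, G i),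
          IsGraphHom
            (fun f g : ∀ i : I₀, G i => ∀ i : I₀, E i (f i) (g i))
            (fun f g : ∀ i, G i => ∀ i, E i (f i) (g i)) h := by
  classical
  intro I G E hI hG
  obtain ⟨U, hfine, hcomp, hnorm⟩ := hU I G hI hG
  let X : Type := I ⊕ (∀ i, G i)
  let P : Type := {A : Set X // #A < κ}
  -- U-limits exist by κ-completeness
  have limex : ∀ (i : I) (f : P → G i), ∃ v : G i, {A : P | f A = v} ∈ U := by
    intro i f
    by_contra hno
    push_neg at hno
    have hcompl : ∀ v : G i, {A : P | f A = v}ᶜ ∈ U := fun v =>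
      Ultrafilter.compl_mem_iff_notMem.2 (hno v)
    have hS : #(Set.range (fun v : G i => {A : P | f A = v}ᶜ)) < κ :=
      lt_of_le_of_lt Cardinal.mk_range_le (hG i)
    have hint := hcomp _ hS (by
      rintro s ⟨v, rfl⟩
      show {A : P | f A = v}ᶜ ∈ U
      exact hcompl v)
    have hempty : ⋂₀ (Set.range (fun v : G i => {A : P | f A = v}ᶜ)) = (∅ : Set P) := by
      ext A
      simp only [Set.mem_sInter, Set.mem_range, Set.mem_empty_iff_false, iff_false, not_forall]
      exact ⟨_, ⟨f A, rfl⟩, by simp⟩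
    rw [hempty] at hint
    exact Ultrafilter.empty_notMem hint
  by_cases hemp : ∃ i, IsEmpty (G i)
  · -- some graph empty: singleton index set, vacuous hom
    obtain ⟨i0, hi0⟩ := hemp
    obtain ⟨A, hA⟩ := Ultrafilter.nonempty_of_mem (hfine (Sum.inl i0))
    have h1κ : (1 : Cardinal) < κ := by
      refine lt_of_le_of_lt ?_ A.2
      rw [Cardinal.one_le_iff_ne_zero, Cardinal.mk_ne_zero_iff]
      exact ⟨⟨_, hA⟩⟩
    refine ⟨{i0}, by rw [Cardinal.mk_singleton]; exact h1κ, ?_⟩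
    refine ⟨fun x => (hi0.false (x ⟨i0, rfl⟩)).elim, ?_⟩
    intro v w _
    exact (hi0.false (v ⟨i0, rfl⟩)).elim
  · push_neg at hemp
    have hne : ∀ i, Nonempty (G i) := fun i => hemp i
    have c : ∀ i, G i := fun i => (hne i).some
    by_contra hns
    push_neg at hns
    -- index part of A
    set IA : P → Set I := fun A => {i : I | Sum.inl i ∈ A.1} with hIAdef
    have hIA : ∀ A : P, #(IA A) < κ := by
      intro A
      refine lt_of_le_of_lt (Cardinal.mk_le_of_injective
        (f := fun i : IA A => (⟨Sum.inl i.1, i.2⟩ : A.1)) ?_) A.2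
      intro a b hab
      apply Subtype.ext
      exact Sum.inl_injective (congrArg Subtype.val hab)
    -- the candidate homs h_A
    set hA : ∀ A : P, (∀ i : IA A, G i) → (∀ i, G i) := fun A x =>
      if hc : ∃ g : ∀ i, G i, Sum.inr g ∈ A.1 ∧ ∀ (i : I) (hi : i ∈ IA A), g i = x ⟨i, hi⟩
      then hc.choose
      else fun i => if hi : i ∈ IA A then x ⟨i, hi⟩ else c i
      with hhAdef
    -- counterexamples
    have hcex : ∀ A : P, ∃ x y : (∀ i : IA A, G i),
        (∀ i : IA A, E i (x i) (y i)) ∧ ∃ i : I, ¬ E i (hA A x i) (hA A y i) := by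
      intro A
      have h1 := hns (IA A) (hIA A) (hA A)
      rw [IsGraphHom] at h1
      push_neg at h1
      exact h1
    choose x y hadj ix hnE using hcex
    -- U-limits gx gy
    set gx : ∀ i, G i := fun i =>
      (limex i (fun A => if hi : i ∈ IA A then x A ⟨i, hi⟩ else c i)).choose with hgxdef
    set gy : ∀ i, G i := fun i =>
      (limex i (fun A => if hi : i ∈ IA A then y A ⟨i, hi⟩ else c i)).choose with hgydef
    have hgx : ∀ i : I, {A : P | (if hi : i ∈ IA A then x A ⟨i, hi⟩ else c i) = gx i} ∈ U := by
      intro i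
      rw [hgxdef]
      exact (limex i (fun A => if hi : i ∈ IA A then x A ⟨i, hi⟩ else c i)).choose_spec
    have hgy : ∀ i : I, {A : P | (if hi : i ∈ IA A then y A ⟨i, hi⟩ else c i) = gy i} ∈ U := by
      intro i
      rw [hgydef]
      exact (limex i (fun A => if hi : i ∈ IA A then y A ⟨i, hi⟩ else c i)).choose_spec
    -- Step 1: a.e. A, x A = gx ↾ IA A and y A = gy ↾ IA A
    set S₁ : Set P := {A : P | ∀ (i : I) (hi : i ∈ IA A),
        x A ⟨i, hi⟩ = gx i ∧ y A ⟨i, hi⟩ = gy i} with hS₁def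
    have hS₁ : S₁ ∈ U := by
      by_contra hS1n
      have hT : S₁ᶜ ∈ U := Ultrafilter.compl_mem_iff_notMem.2 hS1n
      have hc : ∀ A : P, A ∈ S₁ᶜ → ∃ i : I, ∃ hi : i ∈ IA A,
          ¬ (x A ⟨i, hi⟩ = gx i ∧ y A ⟨i, hi⟩ = gy i) := by
        intro A hAc
        by_contra hno
        apply hAc
        intro i hi
        by_contra hC
        exact hno ⟨i, hi, hC⟩
      set f : P → X := fun A =>
        if h : ∃ i : I, ∃ hi : i ∈ IA A, ¬ (x A ⟨i, hi⟩ = gx i ∧ y A ⟨i, hi⟩ = gy i)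
        then Sum.inl h.choose else Sum.inr c with hfdef
      have hmem : ∀ A ∈ S₁ᶜ, f A ∈ A.1 := by
        intro A hAc
        have h := hc A hAc
        rw [hfdef]
        simp only [dif_pos h]
        obtain ⟨hi, -⟩ := h.choose_spec
        exact hi
      obtain ⟨z, hz⟩ := hnorm f S₁ᶜ hT hmem
      obtain ⟨A₀, hA₀T, hA₀z⟩ := Ultrafilter.nonempty_of_mem (Filter.inter_mem hT hz)
      have h₀ := hc A₀ hA₀T
      have hz0 : z = Sum.inl h₀.choose := by
        rw [← hA₀z, hfdef]; simp only [dif_pos h₀]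
      set i₀ := h₀.choose with hi₀def
      obtain ⟨A₁, ⟨⟨hA₁T, hA₁z⟩, hx1⟩, hy1⟩ := Ultrafilter.nonempty_of_mem
        (Filter.inter_mem (Filter.inter_mem (Filter.inter_mem hT hz) (hgx i₀)) (hgy i₀))
      have h₁ := hc A₁ hA₁T
      have hch : h₁.choose = i₀ := by
        have : f A₁ = Sum.inl h₁.choose := by rw [hfdef]; simp only [dif_pos h₁]
        have h2 : (Sum.inl h₁.choose : X) = Sum.inl i₀ := by rw [← this, hA₁z, hz0]
        exact Sum.inl_injective h2
      have hQ : ∃ hi : i₀ ∈ IA A₁, ¬ (x A₁ ⟨i₀, hi⟩ = gx i₀ ∧ y A₁ ⟨i₀, hi⟩ = gy i₀) :=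
        hch ▸ h₁.choose_spec
      obtain ⟨hi₀A, hnC⟩ := hQ
      change (if hi : i₀ ∈ IA A₁ then x A₁ ⟨i₀, hi⟩ else c i₀) = gx i₀ at hx1
      change (if hi : i₀ ∈ IA A₁ then y A₁ ⟨i₀, hi⟩ else c i₀) = gy i₀ at hy1
      rw [dif_pos hi₀A] at hx1 hy1
      exact hnC ⟨hx1, hy1⟩
    -- Step 2: gx and gy are adjacent at every coordinate
    have hadj' : ∀ i : I, E i (gx i) (gy i) := by
      intro i
      obtain ⟨B, hB1, hB2⟩ := Ultrafilter.nonempty_of_mem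
        (Filter.inter_mem hS₁ (hfine (Sum.inl i)))
      have hi : i ∈ IA B := hB2
      have h := hadj B ⟨i, hi⟩
      rwa [(hB1 i hi).1, (hB1 i hi).2] at h
    -- Step 3: uniqueness sets W
    have hW : ∀ g : ∀ i, G i,
        ({A : P | Sum.inr g ∈ A.1} ∩ {A : P | ∀ g' : ∀ i, G i, Sum.inr g' ∈ A.1 →
          (∀ (i : I) (hi : i ∈ IA A), g' i = g i) → g' = g}) ∈ U := by
      intro g
      refine Filter.inter_mem (hfine (Sum.inr g)) ?_
      by_contra hn
      have hT : {A : P | ∀ g' : ∀ i, G i, Sum.inr g' ∈ A.1 →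
          (∀ (i : I) (hi : i ∈ IA A), g' i = g i) → g' = g}ᶜ ∈ U :=
        Ultrafilter.compl_mem_iff_notMem.2 hn
      have hc : ∀ A : P, A ∈ ({A : P | ∀ g' : ∀ i, G i, Sum.inr g' ∈ A.1 →
          (∀ (i : I) (hi : i ∈ IA A), g' i = g i) → g' = g}ᶜ) →
          ∃ g' : ∀ i, G i, Sum.inr g' ∈ A.1 ∧
            (∀ (i : I) (hi : i ∈ IA A), g' i = g i) ∧ g' ≠ g := by
        intro A hAc
        by_contra hno
        apply hAc
        intro g' h1 h2
        by_contra hne'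
        exact hno ⟨g', h1, h2, hne'⟩
      set f : P → X := fun A =>
        if h : ∃ g' : ∀ i, G i, Sum.inr g' ∈ A.1 ∧
            (∀ (i : I) (hi : i ∈ IA A), g' i = g i) ∧ g' ≠ g
        then Sum.inr h.choose else Sum.inr g with hfdef
      have hmem : ∀ A ∈ ({A : P | ∀ g' : ∀ i, G i, Sum.inr g' ∈ A.1 →
          (∀ (i : I) (hi : i ∈ IA A), g' i = g i) → g' = g}ᶜ), f A ∈ A.1 := by
        intro A hAc
        have h := hc A hAc
        rw [hfdef]
        simp only [dif_pos h]
        exact h.choose_spec.1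
      obtain ⟨z, hz⟩ := hnorm f _ hT hmem
      obtain ⟨A₀, hA₀T, hA₀z⟩ := Ultrafilter.nonempty_of_mem (Filter.inter_mem hT hz)
      have h₀ := hc A₀ hA₀T
      have hz0 : z = Sum.inr h₀.choose := by
        rw [← hA₀z, hfdef]; simp only [dif_pos h₀]
      set g₀ := h₀.choose with hg₀def
      have hne₀ : g₀ ≠ g := h₀.choose_spec.2.2
      have : ∃ i₀ : I, g₀ i₀ ≠ g i₀ := by
        by_contra hno
        push_neg at hno
        exact hne₀ (funext hno)
      obtain ⟨i₀, hne₁⟩ := this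
      obtain ⟨A₁, ⟨⟨hA₁T, hA₁z⟩, hi₀A⟩⟩ := Ultrafilter.nonempty_of_mem
        (Filter.inter_mem (Filter.inter_mem hT hz) (hfine (Sum.inl i₀)))
      have h₁ := hc A₁ hA₁T
      have hch : h₁.choose = g₀ := by
        have : f A₁ = Sum.inr h₁.choose := by rw [hfdef]; simp only [dif_pos h₁]
        have h2 : (Sum.inr h₁.choose : X) = Sum.inr g₀ := by rw [← this, hA₁z, hz0]
        exact Sum.inr_injective h2
      have := h₁.choose_spec.2.1 i₀ hi₀A
      rw [hch] at this
      exact hne₁ this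
    -- Step 4: derive the contradiction
    obtain ⟨A, hA1, ⟨hA2f, hA2u⟩, ⟨hA3f, hA3u⟩⟩ := Ultrafilter.nonempty_of_mem
      (Filter.inter_mem hS₁ (Filter.inter_mem (hW gx) (hW gy)))
    have hhx : hA A (x A) = gx := by
      have hex : ∃ g : ∀ i, G i, Sum.inr g ∈ A.1 ∧
          ∀ (i : I) (hi : i ∈ IA A), g i = x A ⟨i, hi⟩ :=
        ⟨gx, hA2f, fun i hi => ((hA1 i hi).1).symm⟩
      rw [hhAdef]
      simp only [dif_pos hex]
      exact hA2u _ hex.choose_spec.1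
        (fun i hi => (hex.choose_spec.2 i hi).trans (hA1 i hi).1)
    have hhy : hA A (y A) = gy := by
      have hex : ∃ g : ∀ i, G i, Sum.inr g ∈ A.1 ∧
          ∀ (i : I) (hi : i ∈ IA A), g i = y A ⟨i, hi⟩ :=
        ⟨gy, hA3f, fun i hi => ((hA1 i hi).2).symm⟩
      rw [hhAdef]
      simp only [dif_pos hex]
      exact hA3u _ hex.choose_spec.1
        (fun i hi => (hex.choose_spec.2 i hi).trans (hA1 i hi).2)
    have := hnE A
    rw [hhx, hhy] at this
    exact this (hadj' (ix A))
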